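/- For an integer N ≥ 1, there exists an integer a with 1 + a + a² + a³ + a⁴ ≡ 0 (mod N) if and only if 25 does not divide N and every prime divisor p of N with p ≠ 5 satisfies p ≡ 1 (mod 5). -/

import Mathlib

private lemma phi5_not_dvd_25 (a : ℤ) : ¬ (25:ℤ) ∣ 1 + a + a ^ 2 + a ^ 3 + a ^ 4 := by
  intro h
  have h2 : ((1 + a + a ^ 2 + a ^ 3 + a ^ 4 : ℤ) : ZMod 25) = 0 := by
    rw [ZMod.intCast_zmod_eq_zero_iff_dvd]; exact_mod_cast h
  push_cast at h2
  revert h2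
  generalize (a : ZMod 25) = b
  revert b
  decide

private lemma phi5_prime_mod (p : ℕ) (hp : p.Prime) (hp5 : p ≠ 5) (a : ℤ)
    (h : (p:ℤ) ∣ 1 + a + a ^ 2 + a ^ 3 + a ^ 4) : p % 5 = 1 := by
  haveI : Fact p.Prime := ⟨hp⟩
  set x : ZMod p := (a : ZMod p) with hx
  have h0 : 1 + x + x^2 + x^3 + x^4 = 0 := by
    have h2 : ((1 + a + a ^ 2 + a ^ 3 + a ^ 4 : ℤ) : ZMod p) = 0 := by
      rw [ZMod.intCast_zmod_eq_zero_iff_dvd]; exact_mod_cast h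
    push_cast at h2
    linear_combination h2
  have hx5 : x ^ 5 = 1 := by linear_combination (x - 1) * h0
  have hxne : x ≠ 1 := by
    intro h1
    rw [h1] at h0
    have h5 : ((5:ℕ) : ZMod p) = 0 := by push_cast; linear_combination h0
    rw [ZMod.natCast_eq_zero_iff] at h5
    exact hp5 ((Nat.prime_dvd_prime_iff_eq hp (by norm_num)).mp h5)
  have ho : orderOf x = 5 := by
    have hdvd : orderOf x ∣ 5 := orderOf_dvd_of_pow_eq_one hx5
    rcases (Nat.Prime.eq_one_or_self_of_dvd (by norm_num) _ hdvd) with h1 | h1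
    · exact absurd (orderOf_eq_one_iff.mp h1) hxne
    · exact h1
  have hu : IsUnit x := IsUnit.of_pow_eq_one hx5 (by norm_num)
  have h5d : (5:ℕ) ∣ p - 1 := by
    have : orderOf hu.unit = 5 := by
      rw [← orderOf_units, hu.unit_spec, ho]
    rw [← this, ← ZMod.card_units p]
    exact orderOf_dvd_card
  have hp2 := hp.two_le
  obtain ⟨m, hm⟩ := h5d
  omega

private lemma phi5_prime_pow (p : ℕ) (k : ℕ) (hp : p.Prime) (h1 : p % 5 = 1) :
    ∃ a : ℤ, ((p:ℤ) ^ k) ∣ 1 + a + a ^ 2 + a ^ 3 + a ^ 4 := by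
  haveI : Fact p.Prime := ⟨hp⟩
  rcases Nat.eq_zero_or_pos k with rfl | hk
  · exact ⟨0, by norm_num⟩
  have hp2 := hp.two_le
  haveI : NeZero (p ^ k) := ⟨pow_ne_zero k (by omega)⟩
  have hcard : Fintype.card (ZMod (p ^ k))ˣ = p ^ (k - 1) * (p - 1) := by
    rw [ZMod.card_units_eq_totient, Nat.totient_prime_pow hp hk]
  have h5card : (5:ℕ) ∣ Fintype.card (ZMod (p ^ k))ˣ := by
    rw [hcard]
    exact Dvd.dvd.mul_left ⟨p / 5, by omega⟩ _
  haveI : Fact (Nat.Prime 5) := ⟨by norm_num⟩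
  obtain ⟨x, hx⟩ := exists_prime_orderOf_dvd_card 5 h5card
  set z : ZMod (p ^ k) := (x : ZMod (p ^ k)) with hz
  set a : ℤ := (z.val : ℤ) with ha
  refine ⟨a, ?_⟩
  have haz : ((a : ℤ) : ZMod (p ^ k)) = z := by
    rw [ha]; push_cast; rw [ZMod.natCast_val, ZMod.cast_id]
  have hz5 : z ^ 5 = 1 := by
    have h := pow_orderOf_eq_one x
    rw [hx] at h
    rw [hz, ← Units.val_pow_eq_pow_val, h, Units.val_one]
  have hdvd51 : ((p:ℤ) ^ k) ∣ (a - 1) * (1 + a + a ^ 2 + a ^ 3 + a ^ 4) := by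
    have : (((a - 1) * (1 + a + a ^ 2 + a ^ 3 + a ^ 4) : ℤ) : ZMod (p ^ k)) = 0 := by
      push_cast
      rw [haz]
      linear_combination hz5
    rw [ZMod.intCast_zmod_eq_zero_iff_dvd] at this
    exact_mod_cast this
  -- p does not divide a - 1
  have hpa1 : ¬ (p:ℤ) ∣ (a - 1) := by
    intro hd
    have hap : ((a : ℤ) : ZMod p) = 1 := by
      have : ((a - 1 : ℤ) : ZMod p) = 0 := by
        rw [ZMod.intCast_zmod_eq_zero_iff_dvd]; exact hd
      push_cast at this
      linear_combination this
    -- x is in the kernel of unitsMap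
    have hpk : p ∣ p ^ k := dvd_pow_self p (by omega)
    set f := ZMod.unitsMap hpk with hf
    have hker : x ∈ f.ker := by
      rw [MonoidHom.mem_ker]
      apply Units.ext
      rw [hf]
      show (ZMod.castHom hpk (ZMod p)) z = 1
      calc (ZMod.castHom hpk (ZMod p)) z
          = (ZMod.castHom hpk (ZMod p)) ((a : ℤ) : ZMod (p ^ k)) := by rw [haz]
        _ = ((a : ℤ) : ZMod p) := map_intCast _ _
        _ = 1 := hap
    have hsurj : Function.Surjective f := ZMod.unitsMap_surjective hpk
    have hrange : Nat.card f.range = p - 1 := by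
      rw [MonoidHom.range_eq_top_of_surjective f hsurj]
      simp only [Subgroup.card_top]
      rw [Nat.card_eq_fintype_card, ZMod.card_units p]
    have hkercard : Nat.card f.ker = p ^ (k - 1) := by
      have h2 : Nat.card f.ker * f.ker.index = Nat.card (ZMod (p ^ k))ˣ :=
        Subgroup.card_mul_index _
      have h3 : Nat.card (ZMod (p ^ k))ˣ = p ^ (k - 1) * (p - 1) := by
        rw [Nat.card_eq_fintype_card, hcard]
      rw [Subgroup.index_ker, hrange, h3] at h2
      have : 0 < p - 1 := by omega
      exact Nat.eq_of_mul_eq_mul_right this h2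
    have h5pk : (5:ℕ) ∣ p ^ (k - 1) := by
      rw [← hkercard, ← hx]
      exact Subgroup.orderOf_dvd_natCard _ hker
    have := (Nat.Prime.dvd_of_dvd_pow (p := 5) (by norm_num) h5pk)
    have : p = 5 := ((Nat.prime_dvd_prime_iff_eq (by norm_num) hp).mp this).symm
    omega
  have hcop : IsCoprime ((p:ℤ) ^ k) (a - 1) := by
    apply IsCoprime.pow_left
    exact (Nat.prime_iff_prime_int.mp hp).coprime_iff_not_dvd.mpr hpa1
  exact hcop.dvd_of_dvd_mul_left hdvd51

theorem cyclotomic_five_solvable_mod_N_iff (N : ℕ) (hN : 1 ≤ N) :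
    (∃ a : ℤ, (N : ℤ) ∣ 1 + a + a ^ 2 + a ^ 3 + a ^ 4) ↔
    ¬ (25 ∣ N) ∧ ∀ p : ℕ, p.Prime → p ∣ N → p ≠ 5 → p % 5 = 1 := by
  constructor
  · rintro ⟨a, ha⟩
    constructor
    · intro h25
      exact phi5_not_dvd_25 a (dvd_trans (by exact_mod_cast Int.natCast_dvd_natCast.mpr h25) ha)
    · intro p hp hpN hp5
      exact phi5_prime_mod p hp hp5 a (dvd_trans (by exact_mod_cast Int.natCast_dvd_natCast.mpr hpN) ha)
  · rintro ⟨h25, hprimes⟩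
    clear hN
    induction N using Nat.recOnPosPrimePosCoprime with
    | prime_pow p k hp hk =>
      rcases eq_or_ne p 5 with rfl | hne
      · have hk1 : k = 1 := by
          by_contra hk1
          apply h25
          have : (2:ℕ) ≤ k := by omega
          calc (25:ℕ) = 5 ^ 2 := by norm_num
            _ ∣ 5 ^ k := pow_dvd_pow 5 this
        refine ⟨1, ?_⟩
        rw [hk1]
        norm_num
      · have h1 : p % 5 = 1 := hprimes p hp (dvd_pow_self p (by omega)) hne
        obtain ⟨a, ha⟩ := phi5_prime_pow p k hp h1
        exact ⟨a, by exact_mod_cast ha⟩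
    | zero =>
      exact absurd (dvd_zero 25) h25
    | one =>
      exact ⟨0, by norm_num⟩
    | coprime a b ha hb hab iha ihb =>
      obtain ⟨x, hx⟩ := iha (fun h => h25 (h.mul_right b)) (fun p hp hpa => hprimes p hp (hpa.mul_right b))
      obtain ⟨y, hy⟩ := ihb (fun h => h25 (h.mul_left a)) (fun p hp hpb => hprimes p hp (hpb.mul_left a))
      haveI : NeZero a := ⟨by omega⟩
      haveI : NeZero b := ⟨by omega⟩
      haveI : NeZero (a * b) := ⟨by positivity⟩
      set φ := ZMod.chineseRemainder hab with hφ
      set c : ℤ := ((φ.symm ((x : ZMod a), (y : ZMod b))).val : ℤ) with hc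
      refine ⟨c, ?_⟩
      rw [← ZMod.intCast_zmod_eq_zero_iff_dvd]
      have hcc : ((c : ℤ) : ZMod (a * b)) = φ.symm ((x : ZMod a), (y : ZMod b)) := by
        rw [hc]; push_cast; rw [ZMod.natCast_val, ZMod.cast_id]
      have hφc : φ ((c : ℤ) : ZMod (a*b)) = ((x : ZMod a), (y : ZMod b)) := by
        rw [hcc]; exact φ.apply_symm_apply _
      have hxa : ((1 + x + x ^ 2 + x ^ 3 + x ^ 4 : ℤ) : ZMod a) = 0 := by
        rw [ZMod.intCast_zmod_eq_zero_iff_dvd]; exact hx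
      have hyb : ((1 + y + y ^ 2 + y ^ 3 + y ^ 4 : ℤ) : ZMod b) = 0 := by
        rw [ZMod.intCast_zmod_eq_zero_iff_dvd]; exact hy
      push_cast at hxa hyb ⊢
      apply φ.injective
      rw [map_zero]
      simp only [map_add, map_pow, map_one]
      rw [hφc]
      simp only [Prod.ext_iff, Prod.fst_add, Prod.snd_add, Prod.pow_fst, Prod.pow_snd,
        Prod.fst_one, Prod.snd_one, Prod.fst_zero, Prod.snd_zero]
      exact ⟨by linear_combination hxa, by linear_combination hyb⟩
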